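/- Let G = (x − 𝔮(y), U(x−𝔮(y), y)) be the secret map and G_pub = A₁ ∘ G ∘ A₂, regarded as a function 𝔽_q^n → 𝔽_q^m. Then there exist m linearly independent polynomials in 𝔽_q[z₁,…,z_n, w₁,…,w_m], each of total degree at most 2 and each vanishing at (z̄, G_pub(z̄)) for every z̄ ∈ 𝔽_q^n, such that at least t of them are of the special form Σ_{1≤j≤k≤n} γ_{jk} z_j z_k + Σ_{j=1}^m δ_j w_j + Σ_{j=1}^n ε_j z_j + ζ, i.e., they contain no monomials of the form w_a w_b or w_a z_b. -/

import Mathlib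

open MvPolynomial

section Aux

variable {K : Type*} [Field K]

/-- Substituting polynomials of total degree ≤ 1 into `p` does not increase total degree. -/
lemma totalDegree_aeval_le_one {σ τ : Type*} (f : σ → MvPolynomial τ K)
    (hf : ∀ j, (f j).totalDegree ≤ 1) (p : MvPolynomial σ K) :
    (aeval f p).totalDegree ≤ p.totalDegree := by
  classical
  conv_lhs => rw [p.as_sum, map_sum]
  refine totalDegree_finsetSum_le fun d hd => ?_
  rw [aeval_monomial]
  refine (totalDegree_mul _ _).trans ?_
  have h1 : ((algebraMap K (MvPolynomial τ K)) (coeff d p)).totalDegree = 0 := totalDegree_C _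
  rw [h1, zero_add]
  refine le_trans ?_ (le_totalDegree hd)
  rw [Finsupp.prod]
  refine (totalDegree_finset_prod _ _).trans ?_
  calc ∑ j ∈ d.support, (f j ^ d j).totalDegree
      ≤ ∑ j ∈ d.support, d j * 1 :=
        Finset.sum_le_sum fun j _ =>
          (totalDegree_pow _ _).trans (Nat.mul_le_mul_left _ (hf j))
    _ = d.sum fun _ e => e := by simp [Finsupp.sum]

lemma vars_aeval_subset {σ τ : Type*} [DecidableEq τ] (f : σ → MvPolynomial τ K)
    (S : Finset τ) (hf : ∀ j, (f j).vars ⊆ S) (p : MvPolynomial σ K) :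
    (aeval f p).vars ⊆ S := by
  have h : aeval f p = bind₁ f p := rfl
  rw [h]
  exact (vars_bind₁ f p).trans (Finset.biUnion_subset.mpr fun i _ => hf i)

lemma eval_aeval' {σ τ : Type*} (v : τ → K) (g : σ → MvPolynomial τ K)
    (p : MvPolynomial σ K) :
    eval v (aeval g p) = eval (fun j => eval v (g j)) p := by
  have h1 : ∀ (w : τ → K) (q : MvPolynomial τ K), eval w q = aeval w q := by
    intro w q; rw [← coe_aeval_eq_eval]; rfl
  have h2 : ∀ (w : σ → K) (q : MvPolynomial σ K), eval w q = aeval w q := by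
    intro w q; rw [← coe_aeval_eq_eval]; rfl
  rw [h1, comp_aeval_apply,
    show (fun i => aeval v (g i)) = (fun j => eval v (g j)) from
      funext fun j => (h1 v (g j)).symm, ← h2]

lemma coeff_eq_zero_of_notMem_vars {σ : Type*} (p : MvPolynomial σ K) (v : σ)
    (d : σ →₀ ℕ) (hv : v ∉ p.vars) (hd : d v ≠ 0) : coeff d p = 0 := by
  by_contra h
  exact hv ((mem_vars v).mpr ⟨d, mem_support_iff.mpr h, Finsupp.mem_support_iff.mpr hd⟩)

end Aux

/-- Substitution `x_j ↦ x_j - q_j(y)` (identity on the `y`-variables). -/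
noncomputable def substQ {K : Type*} [Field K] (n t : ℕ)
    (Q : Fin t → MvPolynomial (Fin n) K) :
    MvPolynomial (Fin n) K →ₐ[K] MvPolynomial (Fin n) K :=
  aeval fun k : Fin n => if hk : (k : ℕ) < t then X k - Q ⟨(k : ℕ), hk⟩ else X k

/-- The secret map `G = (x - q(y), U(x - q(y), y))`, as a family of `m` polynomials. -/
noncomputable def Gsecret {K : Type*} [Field K] {n m t : ℕ} (htn : t < n)
    (Q : Fin t → MvPolynomial (Fin n) K) (U : Fin (m - t) → MvPolynomial (Fin n) K)
    (i : Fin m) : MvPolynomial (Fin n) K :=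
  if h : (i : ℕ) < t then X (⟨(i : ℕ), h.trans htn⟩ : Fin n) - Q ⟨(i : ℕ), h⟩
  else substQ n t Q (U ⟨(i : ℕ) - t, by have := i.isLt; omega⟩)

/-- The public map `G_pub = A₁ ∘ G ∘ A₂`, as a function `K^n → K^m`, where
`A₁(v) = L₁ v + c₁` and `A₂(v) = L₂ v + c₂`. -/
noncomputable def GpubFun {K : Type*} [Field K] {n m t : ℕ} (htn : t < n)
    (Q : Fin t → MvPolynomial (Fin n) K) (U : Fin (m - t) → MvPolynomial (Fin n) K)
    (L1 : Matrix (Fin m) (Fin m) K) (c1 : Fin m → K)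
    (L2 : Matrix (Fin n) (Fin n) K) (c2 : Fin n → K)
    (z : Fin n → K) : Fin m → K :=
  L1.mulVec (fun j => eval (L2.mulVec z + c2) (Gsecret htn Q U j)) + c1

/-- A polynomial in `K[z, w]` is of the special form
`∑ γ_{jk} z_j z_k + ∑ δ_j w_j + ∑ ε_j z_j + ζ` iff every monomial in its support involving
a `w`-variable is a single `w_a` (no monomials `w_a w_b` or `w_a z_b`). -/
def specialForm {K : Type*} [Field K] {n m : ℕ} (p : MvPolynomial (Fin n ⊕ Fin m) K) : Prop :=
  ∀ d ∈ p.support, ∀ a : Fin m, d (Sum.inr a) ≠ 0 → d = Finsupp.single (Sum.inr a) 1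


/-- there exist `m` linearly independent polynomials of total degree ≤ 2
vanishing at every input/output pair of `G_pub`, at least `t` of which are of the special
form containing no monomials `w_a w_b` or `w_a z_b`. -/
theorem stmt_14 {K : Type*} [Field K] [Fintype K] {n m t : ℕ}
    (ht : 0 < t) (htn : t < n) (htm : t ≤ m)
    (Q : Fin t → MvPolynomial (Fin n) K)
    (hQdeg : ∀ j, (Q j).totalDegree ≤ 2)
    (hQvars : ∀ j, ∀ i ∈ (Q j).vars, t ≤ (i : ℕ))
    (U : Fin (m - t) → MvPolynomial (Fin n) K)
    (hUdeg : ∀ i, (U i).totalDegree ≤ 2)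
    (L1 : GL (Fin m) K) (c1 : Fin m → K)
    (L2 : GL (Fin n) K) (c2 : Fin n → K) :
    ∃ R : Fin m → MvPolynomial (Fin n ⊕ Fin m) K,
      LinearIndependent K R ∧
      (∀ i : Fin m,
        (R i).totalDegree ≤ 2 ∧
        ∀ z : Fin n → K,
          eval (Sum.elim z (GpubFun htn Q U (L1 : Matrix (Fin m) (Fin m) K) c1
            (L2 : Matrix (Fin n) (Fin n) K) c2 z)) (R i) = 0) ∧
      ∃ e : Fin t → Fin m, Function.Injective e ∧ ∀ j : Fin t, specialForm (R (e j)) := by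
  classical
  set A1 : Matrix (Fin m) (Fin m) K := (L1 : Matrix (Fin m) (Fin m) K) with hA1
  set M : Matrix (Fin m) (Fin m) K :=
    ((L1⁻¹ : GL (Fin m) K) : Matrix (Fin m) (Fin m) K) with hMdef
  have hMA : M * A1 = 1 := Units.inv_mul L1
  set Y0 : Fin n → MvPolynomial (Fin n) K :=
    fun j => ∑ k, C ((L2 : Matrix (Fin n) (Fin n) K) j k) * X k + C (c2 j) with hY0
  set Yp : Fin n → MvPolynomial (Fin n ⊕ Fin m) K :=
    fun j => rename Sum.inl (Y0 j) with hYp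
  set Wp : Fin m → MvPolynomial (Fin n ⊕ Fin m) K :=
    fun i => ∑ k, C (M i k) * (X (Sum.inr k) - C (c1 k)) with hWp
  set φ : Fin n → MvPolynomial (Fin n ⊕ Fin m) K :=
    fun k => if h : (k : ℕ) < t then Wp ⟨(k : ℕ), h.trans_le htm⟩ else Yp k with hφ
  set R : Fin m → MvPolynomial (Fin n ⊕ Fin m) K := fun i =>
    Wp i - (if h : (i : ℕ) < t then rename Sum.inl (aeval Y0 (Gsecret htn Q U i))
      else aeval φ (U ⟨(i : ℕ) - t, by have := i.isLt; omega⟩)) with hRdef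
  -- degree bounds for the building blocks
  have hY0deg : ∀ j, (Y0 j).totalDegree ≤ 1 := by
    intro j
    refine (totalDegree_add _ _).trans (max_le ?_ (by simp [totalDegree_C]))
    refine totalDegree_finsetSum_le fun k _ => ?_
    refine (totalDegree_mul _ _).trans ?_
    simp [totalDegree_C, totalDegree_X]
  have hWdeg : ∀ i, (Wp i).totalDegree ≤ 1 := by
    intro i
    refine totalDegree_finsetSum_le fun k _ => ?_
    refine (totalDegree_mul _ _).trans ?_
    rw [totalDegree_C, zero_add]
    exact (totalDegree_sub _ _).trans
      (max_le (le_of_eq (totalDegree_X _)) (by simp [totalDegree_C]))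
  have hYpdeg : ∀ j, (Yp j).totalDegree ≤ 1 :=
    fun j => (totalDegree_rename_le _ _).trans (hY0deg j)
  have hφdeg : ∀ k, (φ k).totalDegree ≤ 1 := by
    intro k
    by_cases h : (k : ℕ) < t
    · simp only [hφ, dif_pos h]; exact hWdeg _
    · simp only [hφ, dif_neg h]; exact hYpdeg _
  -- evaluation of the building blocks
  have hevalY0 : ∀ (z : Fin n → K) (j : Fin n),
      eval z (Y0 j) = ((L2 : Matrix (Fin n) (Fin n) K).mulVec z + c2) j := by
    intro z j
    simp [hY0, Matrix.mulVec, dotProduct]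
  have hevalWp : ∀ (v : Fin n → K) (w : Fin m → K) (i : Fin m),
      eval (Sum.elim v w) (Wp i) = M.mulVec (w - c1) i := by
    intro v w i
    simp [hWp, Matrix.mulVec, dotProduct]
  have hGpos : ∀ (i : Fin m) (h : (i : ℕ) < t),
      Gsecret htn Q U i = X (⟨(i : ℕ), h.trans htn⟩ : Fin n) - Q ⟨(i : ℕ), h⟩ :=
    fun i h => dif_pos h
  have hGneg : ∀ (i : Fin m) (h : ¬ (i : ℕ) < t),
      Gsecret htn Q U i = substQ n t Q (U ⟨(i : ℕ) - t, by have := i.isLt; omega⟩) :=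
    fun i h => dif_neg h
  have hsubstQ : ∀ p : MvPolynomial (Fin n) K, substQ n t Q p =
      aeval (fun k : Fin n => if hk : (k : ℕ) < t then X k - Q ⟨(k : ℕ), hk⟩ else X k) p :=
    fun p => rfl
  refine ⟨R, ?_, ?_, ?_⟩
  · -- linear independence
    set ψ : Fin n ⊕ Fin m → MvPolynomial (Fin n ⊕ Fin m) K :=
      Sum.elim (fun _ => 0)
        (fun k => ∑ j, C (A1 k j) * X (Sum.inr j) + C (c1 k)) with hψ
    have hψinl : ∀ j : Fin n, ψ (Sum.inl j) = 0 := fun j => rfl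
    have hψinr : ∀ k : Fin m,
        ψ (Sum.inr k) = ∑ j, C (A1 k j) * X (Sum.inr j) + C (c1 k) := fun k => rfl
    have hTW : ∀ i : Fin m, aeval ψ (Wp i) = X (Sum.inr i) := by
      intro i
      show (aeval ψ) (∑ k, C (M i k) * (X (Sum.inr k) - C (c1 k))) = X (Sum.inr i)
      calc (aeval ψ) (∑ k, C (M i k) * (X (Sum.inr k) - C (c1 k)))
          = ∑ k, C (M i k) * (∑ j, C (A1 k j) * X (Sum.inr j)) := by
            rw [map_sum]
            refine Finset.sum_congr rfl fun k _ => ?_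
            rw [map_mul, map_sub, aeval_C, aeval_C, aeval_X, hψinr,
              algebraMap_eq, add_sub_cancel_right]
        _ = ∑ k, ∑ j, C (M i k * A1 k j) * X (Sum.inr j) := by
            refine Finset.sum_congr rfl fun k _ => ?_
            rw [Finset.mul_sum]
            refine Finset.sum_congr rfl fun j _ => ?_
            rw [C_mul, mul_assoc]
        _ = ∑ j : Fin m, ∑ k : Fin m, C (M i k * A1 k j) * X (Sum.inr j) :=
            Finset.sum_comm
        _ = ∑ j : Fin m, C ((M * A1) i j) * X (Sum.inr j) := by
            refine Finset.sum_congr rfl fun j _ => ?_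
            rw [← Finset.sum_mul, ← map_sum, Matrix.mul_apply]
        _ = X (Sum.inr i) := by
            rw [hMA, Finset.sum_eq_single i]
            · simp [Matrix.one_apply_eq]
            · intro b _ hb
              simp [Matrix.one_apply_ne (Ne.symm hb)]
            · intro habs
              exact absurd (Finset.mem_univ i) habs
    set E : Fin m → MvPolynomial (Fin n ⊕ Fin m) K := fun i =>
      aeval ψ (if h : (i : ℕ) < t then rename Sum.inl (aeval Y0 (Gsecret htn Q U i))
        else aeval φ (U ⟨(i : ℕ) - t, by have := i.isLt; omega⟩)) with hE
    have hTR : ∀ i, aeval ψ (R i) = X (Sum.inr i) - E i := by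
      intro i
      simp only [hRdef, hE]
      rw [map_sub, hTW]
    have hconst : ∀ q : MvPolynomial (Fin n) K,
        (aeval ψ (rename Sum.inl q)).vars = ∅ := by
      intro q
      rw [aeval_rename]
      refine Finset.subset_empty.mp ?_
      refine vars_aeval_subset _ ∅ (fun j => ?_) q
      rw [Function.comp_apply, hψinl, vars_0]
    set S : Finset (Fin n ⊕ Fin m) :=
      Finset.image Sum.inr (Finset.univ.filter fun k : Fin m => (k : ℕ) < t) with hS
    have hES : ∀ i, (E i).vars ⊆ S := by
      intro i
      simp only [hE]
      by_cases h : (i : ℕ) < t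
      · rw [dif_pos h, hconst]
        exact Finset.empty_subset _
      · rw [dif_neg h, comp_aeval_apply]
        refine vars_aeval_subset _ S (fun k => ?_) _
        by_cases hk : (k : ℕ) < t
        · simp only [hφ, dif_pos hk]
          rw [hTW, vars_X]
          intro v hv
          rw [Finset.mem_singleton] at hv
          subst hv
          exact Finset.mem_image.mpr ⟨⟨(k : ℕ), hk.trans_le htm⟩,
            Finset.mem_filter.mpr ⟨Finset.mem_univ _, hk⟩, rfl⟩
        · simp only [hφ, dif_neg hk, hYp]
          rw [hconst]
          exact Finset.empty_subset _
    have hEconst : ∀ i : Fin m, (i : ℕ) < t → (E i).vars = ∅ := by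
      intro i h
      simp only [hE]
      rw [dif_pos h]
      exact hconst _
    refine LinearIndependent.of_comp
      (AlgHom.toLinearMap (aeval ψ : MvPolynomial (Fin n ⊕ Fin m) K →ₐ[K]
        MvPolynomial (Fin n ⊕ Fin m) K)) ?_
    have hcomp : (⇑(AlgHom.toLinearMap (aeval ψ : MvPolynomial (Fin n ⊕ Fin m) K →ₐ[K]
        MvPolynomial (Fin n ⊕ Fin m) K)) ∘ R) = fun i => X (Sum.inr i) - E i := by
      funext i
      simp only [Function.comp_apply, AlgHom.toLinearMap_apply]
      exact hTR i
    rw [hcomp, Fintype.linearIndependent_iff]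
    intro gc hgc
    have hkey : ∀ k : Fin m,
        gc k = ∑ i, gc i * coeff (Finsupp.single (Sum.inr k : Fin n ⊕ Fin m) 1) (E i) := by
      intro k
      have h0 := congrArg (coeff (Finsupp.single (Sum.inr k : Fin n ⊕ Fin m) 1)) hgc
      simp only [coeff_sum, coeff_smul, coeff_sub, coeff_zero, smul_eq_mul, coeff_X'] at h0
      have hsingle : ∀ i : Fin m,
          (if (Finsupp.single (Sum.inr i : Fin n ⊕ Fin m) 1
            = Finsupp.single (Sum.inr k : Fin n ⊕ Fin m) 1) then (1 : K) else 0)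
          = if i = k then 1 else 0 := by
        intro i
        by_cases hik : i = k
        · subst hik; simp
        · rw [if_neg, if_neg hik]
          intro hcontra
          exact hik (Sum.inr_injective ((Finsupp.single_left_inj one_ne_zero).mp hcontra))
      simp only [hsingle, mul_sub, Finset.sum_sub_distrib, mul_ite, mul_one, mul_zero,
        Finset.sum_ite_eq', Finset.mem_univ, if_true] at h0
      exact sub_eq_zero.mp h0
    have hcz : ∀ (i k : Fin m), ¬ (k : ℕ) < t →
        coeff (Finsupp.single (Sum.inr k : Fin n ⊕ Fin m) 1) (E i) = 0 := by
      intro i k hk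
      refine coeff_eq_zero_of_notMem_vars _ (Sum.inr k) _ (fun hmem => ?_) (by simp)
      obtain ⟨k', hk', heq⟩ := Finset.mem_image.mp (hES i hmem)
      obtain ⟨-, hk'lt⟩ := Finset.mem_filter.mp hk'
      exact hk (by rwa [← Sum.inr_injective heq])
    have hge : ∀ k : Fin m, ¬ (k : ℕ) < t → gc k = 0 := by
      intro k hk
      rw [hkey k]
      exact Finset.sum_eq_zero fun i _ => by rw [hcz i k hk, mul_zero]
    intro i
    by_cases hi : (i : ℕ) < t
    · rw [hkey i]
      refine Finset.sum_eq_zero fun j _ => ?_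
      by_cases hj : (j : ℕ) < t
      · have hz : coeff (Finsupp.single (Sum.inr i : Fin n ⊕ Fin m) 1) (E j) = 0 := by
          refine coeff_eq_zero_of_notMem_vars _ (Sum.inr i) _ ?_ (by simp)
          rw [hEconst j hj]
          simp
        rw [hz, mul_zero]
      · rw [hge j hj, zero_mul]
    · exact hge i hi
  · -- degree bound and vanishing
    intro i
    constructor
    · -- degree
      refine (totalDegree_sub _ _).trans (max_le ((hWdeg i).trans one_le_two) ?_)
      by_cases h : (i : ℕ) < t
      · rw [dif_pos h]
        refine (totalDegree_rename_le _ _).trans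
          ((totalDegree_aeval_le_one Y0 hY0deg _).trans ?_)
        rw [hGpos i h]
        refine (totalDegree_sub _ _).trans (max_le ?_ (hQdeg _))
        simp [totalDegree_X]
      · rw [dif_neg h]
        exact (totalDegree_aeval_le_one φ hφdeg _).trans (hUdeg _)
    · -- vanishing on the graph
      intro z
      set av : Fin n → K := (L2 : Matrix (Fin n) (Fin n) K).mulVec z + c2 with hav
      set g : Fin m → K := fun j => eval av (Gsecret htn Q U j) with hg
      have hwv : GpubFun htn Q U (L1 : Matrix (Fin m) (Fin m) K) c1
          (L2 : Matrix (Fin n) (Fin n) K) c2 z = A1.mulVec g + c1 := rfl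
      rw [hwv]
      have hWg : ∀ i : Fin m, eval (Sum.elim z (A1.mulVec g + c1)) (Wp i) = g i := by
        intro i
        rw [hevalWp, add_sub_cancel_right, Matrix.mulVec_mulVec, hMA, Matrix.one_mulVec]
      have hYg : ∀ j : Fin n, eval (Sum.elim z (A1.mulVec g + c1)) (Yp j) = av j := by
        intro j
        rw [hYp]
        rw [eval_rename]
        have : (Sum.elim z (A1.mulVec g + c1)) ∘ Sum.inl = z := rfl
        rw [this, hevalY0]
      rw [hRdef]
      simp only [map_sub]
      rw [hWg]
      by_cases h : (i : ℕ) < t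
      · rw [dif_pos h, eval_rename]
        have hcz : (Sum.elim z (A1.mulVec g + c1)) ∘ Sum.inl = z := rfl
        rw [hcz, eval_aeval']
        have : (fun j => eval z (Y0 j)) = av := by
          funext j; rw [hevalY0]
        rw [this, hg, sub_self]
      · rw [dif_neg h, eval_aeval']
        have hgi : g i = eval (fun k : Fin n =>
            eval av (if hk : (k : ℕ) < t then X k - Q ⟨(k : ℕ), hk⟩ else X k))
            (U ⟨(i : ℕ) - t, by have := i.isLt; omega⟩) := by
          rw [hg]
          simp only [hGneg i h, hsubstQ, eval_aeval']
        rw [hgi]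
        have : (fun k : Fin n => eval (Sum.elim z (A1.mulVec g + c1)) (φ k))
            = fun k : Fin n =>
              eval av (if hk : (k : ℕ) < t then X k - Q ⟨(k : ℕ), hk⟩ else X k) := by
          funext k
          by_cases hk : (k : ℕ) < t
          · simp only [hφ, dif_pos hk, hWg]
            show eval av (Gsecret htn Q U ⟨(k : ℕ), hk.trans_le htm⟩) = _
            rw [hGpos ⟨(k : ℕ), hk.trans_le htm⟩ hk]
          
          · simp only [hφ, dif_neg hk, hYg, eval_X]
        rw [this, sub_self]
  · -- special form
    refine ⟨fun j => ⟨(j : ℕ), lt_of_lt_of_le j.isLt htm⟩, ?_, ?_⟩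
    · intro a b hab
      simpa [Fin.ext_iff] using hab
    · intro j
      have hj : ((⟨(j : ℕ), lt_of_lt_of_le j.isLt htm⟩ : Fin m) : ℕ) < t := j.isLt
      intro d hd a ha
      rw [hRdef] at hd
      simp only [dif_pos hj] at hd
      have hsub : ∀ p q : MvPolynomial (Fin n ⊕ Fin m) K,
          (p - q).support ⊆ p.support ∪ q.support := by
        intro p q
        rw [sub_eq_add_neg]
        exact support_add.trans (by rw [support_neg])
      have hd' := hsub _ _ hd
      rcases Finset.mem_union.mp hd' with hdW | hdR
      · -- monomial of Wp
        have hWsupp : ∀ i : Fin m, (Wp i).support ⊆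
            Finset.univ.biUnion (fun k : Fin m =>
              {Finsupp.single (Sum.inr k : Fin n ⊕ Fin m) 1, 0}) := by
          intro i
          refine support_sum.trans ?_
          refine Finset.biUnion_mono fun k _ => ?_
          have hterm : C (M i k) * (X (Sum.inr k : Fin n ⊕ Fin m) - C (c1 k))
              = monomial (Finsupp.single (Sum.inr k : Fin n ⊕ Fin m) 1) (M i k)
                - monomial 0 (M i k * c1 k) := by
            rw [mul_sub, C_mul_X_eq_monomial, ← C_mul, C_apply]
          rw [hterm]
          refine (hsub _ _).trans ?_
          intro d' hd'
          rcases Finset.mem_union.mp hd' with h1 | h1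
          · exact Finset.mem_insert.mpr (Or.inl (Finset.mem_singleton.mp
              (support_monomial_subset h1)))
          · exact Finset.mem_insert.mpr (Or.inr (support_monomial_subset h1))
        obtain ⟨k, _, hk⟩ := Finset.mem_biUnion.mp (hWsupp _ hdW)
        rcases Finset.mem_insert.mp hk with rfl | hk0
        · have heq : (Sum.inr k : Fin n ⊕ Fin m) = Sum.inr a := by
            by_contra hne
            exact ha (Finsupp.single_eq_of_ne' hne)
          rw [← Sum.inr_injective heq]
        · exfalso
          rw [Finset.mem_singleton.mp hk0] at ha
          exact ha rfl
      · -- monomial of the renamed part: no w-variables at all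
        exfalso
        rw [support_rename_of_injective Sum.inl_injective] at hdR
        obtain ⟨e', _, rfl⟩ := Finset.mem_image.mp hdR
        exact ha (Finsupp.mapDomain_notin_range _ _ (by simp))
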